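/- Relaxation Gap Theorem: Let err be the optimal fitting error of a prediction model class that is projective orthogonal agnostic and information consistent. Suppose there exist r ≤ n and A* ∈ O(n) with err((A*_r)^T z) = 0, and no larger r̃ > r admits an orthogonal A with err((A_r̃)^T z) = 0, and the global solution A^(0) of the relaxed problem min_{A ∈ O(n)} ⟨‖A_r^T (z − g*_z(hist_z))‖²⟩ has a well-defined r-dimensional best subspace. Then err((A^(0)_r)^T z) = 0. -/

import Mathlib

open Matrix

/-- `Ecol n r` is the n×r matrix whose columns are the first r standard basis vectors of ℝⁿ. -/
def Ecol (n r : ℕ) : Matrix (Fin n) (Fin r) ℝ :=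
  Matrix.of fun i j => if (i : ℕ) = (j : ℕ) then 1 else 0

/-- The p-step history matrix of a signal. -/
def Hist (p : ℕ) {k : ℕ} (m : ℤ → Fin k → ℝ) (t : ℤ) : Matrix (Fin k) (Fin p) ℝ :=
  Matrix.of fun i j => m (t - ((j : ℕ) + 1)) i

/-- err(g, m, H) := ⟨‖m(t) − g(H(t))‖²⟩ over the training set T. -/
noncomputable def Err (T : Finset ℤ) {k k' p : ℕ}
    (g : Matrix (Fin k') (Fin p) ℝ → Fin k → ℝ)
    (m : ℤ → Fin k → ℝ) (H : ℤ → Matrix (Fin k') (Fin p) ℝ) : ℝ :=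
  (T.card : ℝ)⁻¹ * ∑ t ∈ T, ∑ i, (m t i - g (H t) i) ^ 2

lemma Ecol_self (k : ℕ) : Ecol k k = 1 := by
  ext i j
  simp [Ecol, Matrix.one_apply, Fin.ext_iff]

lemma Err_nonneg (T : Finset ℤ) {k k' p : ℕ}
    (g : Matrix (Fin k') (Fin p) ℝ → Fin k → ℝ)
    (m : ℤ → Fin k → ℝ) (H : ℤ → Matrix (Fin k') (Fin p) ℝ) : 0 ≤ Err T g m H := by
  apply mul_nonneg (by positivity)
  exact Finset.sum_nonneg fun t _ => Finset.sum_nonneg fun i _ => sq_nonneg _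

lemma sum_sq_orth {k : ℕ} (A : Matrix (Fin k) (Fin k) ℝ) (hA : A * Aᵀ = 1)
    (v : Fin k → ℝ) : ∑ i, (Aᵀ.mulVec v i) ^ 2 = ∑ i, v i ^ 2 := by
  have h1 : ∑ i, (Aᵀ.mulVec v i) ^ 2 = Aᵀ.mulVec v ⬝ᵥ Aᵀ.mulVec v := by
    simp [dotProduct, sq]
  have h2 : ∑ i, v i ^ 2 = v ⬝ᵥ v := by simp [dotProduct, sq]
  rw [h1, h2, dotProduct_mulVec, ← Matrix.mulVec_transpose, mulVec_mulVec,
    transpose_transpose, hA, one_mulVec]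

lemma Hist_mulVec {p k : ℕ} (A : Matrix (Fin k) (Fin k) ℝ) (w : ℤ → Fin k → ℝ) :
    Hist p (fun t => A.mulVec (w t)) = fun t => A * Hist p w t := by
  funext t
  ext i j
  simp [Hist, Matrix.mul_apply, Matrix.mulVec, dotProduct]

lemma reindex_mul_Ecol (n r : ℕ) (hrn : r ≤ n)
    (Arr : Matrix (Fin r) (Fin r) ℝ) (Ass : Matrix (Fin (n-r)) (Fin (n-r)) ℝ) :
    (Matrix.reindex (finSumFinEquiv.trans (finCongr (Nat.add_sub_cancel' hrn)))
      (finSumFinEquiv.trans (finCongr (Nat.add_sub_cancel' hrn)))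
      (Matrix.fromBlocks Arr 0 0 Ass)) * Ecol n r = Ecol n r * Arr := by
  set e := finSumFinEquiv.trans (finCongr (Nat.add_sub_cancel' hrn)) with he
  ext i j
  have hEj : ∀ k : Fin n, Ecol n r k j = if k = e (Sum.inl j) then 1 else 0 := by
    intro k
    simp [Ecol, Fin.ext_iff, he, finSumFinEquiv]
  rw [Matrix.mul_apply]
  simp only [hEj]
  simp only [mul_ite, mul_one, mul_zero]
  rw [Finset.sum_ite_eq' _ (e (Sum.inl j))]
  simp only [Finset.mem_univ, if_true]
  rw [Matrix.reindex_apply, Matrix.submatrix_apply, Equiv.symm_apply_apply]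
  rw [Matrix.mul_apply]
  rcases h : e.symm i with a | b
  · have hia : (i : ℕ) = (a : ℕ) := by
      have : i = e (Sum.inl a) := by rw [← h, Equiv.apply_symm_apply]
      simp [this, he, finSumFinEquiv]
    simp only [Matrix.fromBlocks_apply₁₁]
    rw [Finset.sum_eq_single a]
    · simp [Ecol, hia]
    · intro b _ hb
      have : (a:ℕ) ≠ (b:ℕ) := fun h' => hb (Fin.ext h'.symm)
      simp [Ecol, hia, this]
    · simp
  · have hib : (i : ℕ) = r + (b : ℕ) := by
      have : i = e (Sum.inr b) := by rw [← h, Equiv.apply_symm_apply]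
      simp [this, he, finSumFinEquiv]
    simp only [Matrix.fromBlocks_apply₂₁, Matrix.zero_apply]
    rw [Finset.sum_eq_zero]
    intro k _
    have : (i:ℕ) ≠ (k:ℕ) := by omega
    simp [Ecol, this]

/-- Relaxation Gap Theorem: for a prediction model (given by its optimal
predictors g*) that is projective orthogonal agnostic and information consistent, if some
A* ∈ O(n) extracts an r-dimensional signal with zero optimal prediction error, no larger
dimension admits zero error, and the global solution A⁽⁰⁾ of the relaxed problem has a
well-defined best r-dimensional subspace (every global solution differs from A⁽⁰⁾ by a
factor in O(r, n−r)), then the signal extracted by A⁽⁰⁾ also has zero optimal error. -/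
theorem stmt13 (n p r : ℕ) (hrn : r ≤ n) (T : Finset ℤ) (hT : T.Nonempty)
    (gstar : (k : ℕ) → (ℤ → Fin k → ℝ) → Matrix (Fin k) (Fin p) ℝ → Fin k → ℝ)
    (z : ℤ → Fin n → ℝ)
    -- projective orthogonal agnosticity of the model, for all signals and dimensions
    (hproj : ∀ (k r' : ℕ), r' ≤ k → ∀ A : Matrix (Fin k) (Fin k) ℝ,
      Aᵀ * A = 1 → A * Aᵀ = 1 → ∀ w : ℤ → Fin k → ℝ,
      Err T (fun H => (Ecol k r')ᵀ.mulVec (gstar k (fun t => Aᵀ.mulVec (w t)) H))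
          (fun t => (A * Ecol k r')ᵀ.mulVec (w t)) (fun t => Aᵀ * Hist p w t)
        = Err T (fun H => (A * Ecol k r')ᵀ.mulVec (gstar k w H))
          (fun t => (A * Ecol k r')ᵀ.mulVec (w t)) (Hist p w))
    -- information consistency of the model, for all signals and dimensions
    (hinfo : ∀ (k r' : ℕ), r' ≤ k → ∀ A : Matrix (Fin k) (Fin k) ℝ,
      Aᵀ * A = 1 → A * Aᵀ = 1 → ∀ w : ℤ → Fin k → ℝ,
      Err T (gstar r' (fun t => (A * Ecol k r')ᵀ.mulVec (w t)))
          (fun t => (A * Ecol k r')ᵀ.mulVec (w t))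
          (Hist p (fun t => (A * Ecol k r')ᵀ.mulVec (w t)))
        ≥ Err T (fun H => (A * Ecol k r')ᵀ.mulVec (gstar k w H))
          (fun t => (A * Ecol k r')ᵀ.mulVec (w t)) (Hist p w))
    -- A* extracts an r-dimensional signal of zero optimal error
    (Astar : Matrix (Fin n) (Fin n) ℝ) (hAstar : Astarᵀ * Astar = 1)
    (hAstar' : Astar * Astarᵀ = 1)
    (hzero : Err T (gstar r (fun t => (Astar * Ecol n r)ᵀ.mulVec (z t)))
        (fun t => (Astar * Ecol n r)ᵀ.mulVec (z t))
        (Hist p (fun t => (Astar * Ecol n r)ᵀ.mulVec (z t))) = 0)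
    -- no larger dimension admits zero optimal error
    (hmax : ∀ rt : ℕ, r < rt → rt ≤ n → ∀ A : Matrix (Fin n) (Fin n) ℝ,
      Aᵀ * A = 1 → A * Aᵀ = 1 →
      Err T (gstar rt (fun t => (A * Ecol n rt)ᵀ.mulVec (z t)))
          (fun t => (A * Ecol n rt)ᵀ.mulVec (z t))
          (Hist p (fun t => (A * Ecol n rt)ᵀ.mulVec (z t))) ≠ 0)
    -- A⁽⁰⁾ is a global solution of the relaxed problem
    (A0 : Matrix (Fin n) (Fin n) ℝ) (hA0 : A0ᵀ * A0 = 1) (hA0' : A0 * A0ᵀ = 1)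
    (hA0min : ∀ A : Matrix (Fin n) (Fin n) ℝ, Aᵀ * A = 1 → A * Aᵀ = 1 →
      Err T (fun H => (A0 * Ecol n r)ᵀ.mulVec (gstar n z H))
          (fun t => (A0 * Ecol n r)ᵀ.mulVec (z t)) (Hist p z)
        ≤ Err T (fun H => (A * Ecol n r)ᵀ.mulVec (gstar n z H))
          (fun t => (A * Ecol n r)ᵀ.mulVec (z t)) (Hist p z))
    -- well-defined best subspace: every global solution differs from A⁽⁰⁾ by Ã ∈ O(r, n−r)
    (hlem1 : ∀ B : Matrix (Fin n) (Fin n) ℝ, Bᵀ * B = 1 → B * Bᵀ = 1 →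
      (∀ A : Matrix (Fin n) (Fin n) ℝ, Aᵀ * A = 1 → A * Aᵀ = 1 →
        Err T (fun H => (B * Ecol n r)ᵀ.mulVec (gstar n z H))
            (fun t => (B * Ecol n r)ᵀ.mulVec (z t)) (Hist p z)
          ≤ Err T (fun H => (A * Ecol n r)ᵀ.mulVec (gstar n z H))
            (fun t => (A * Ecol n r)ᵀ.mulVec (z t)) (Hist p z)) →
      ∃ (Arr : Matrix (Fin r) (Fin r) ℝ) (Ass : Matrix (Fin (n - r)) (Fin (n - r)) ℝ),
        Arrᵀ * Arr = 1 ∧ Arr * Arrᵀ = 1 ∧ Assᵀ * Ass = 1 ∧ Ass * Assᵀ = 1 ∧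
        A0 = B * Matrix.reindex (finSumFinEquiv.trans (finCongr (Nat.add_sub_cancel' hrn)))
            (finSumFinEquiv.trans (finCongr (Nat.add_sub_cancel' hrn)))
            (Matrix.fromBlocks Arr 0 0 Ass)) :
    Err T (gstar r (fun t => (A0 * Ecol n r)ᵀ.mulVec (z t)))
        (fun t => (A0 * Ecol n r)ᵀ.mulVec (z t))
        (Hist p (fun t => (A0 * Ecol n r)ᵀ.mulVec (z t))) = 0 := by
  set w : ℤ → Fin r → ℝ := fun t => (Astar * Ecol n r)ᵀ.mulVec (z t) with hw
  -- Astar achieves value 0 in the relaxed problem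
  have hArel : Err T (fun H => (Astar * Ecol n r)ᵀ.mulVec (gstar n z H))
      (fun t => (Astar * Ecol n r)ᵀ.mulVec (z t)) (Hist p z) = 0 := by
    have h := hinfo n r hrn Astar hAstar hAstar' z
    rw [← hw] at h ⊢
    rw [hzero] at h
    exact le_antisymm h (Err_nonneg _ _ _ _)
  -- hence Astar is a global minimizer of the relaxed problem
  have hmin : ∀ A : Matrix (Fin n) (Fin n) ℝ, Aᵀ * A = 1 → A * Aᵀ = 1 →
      Err T (fun H => (Astar * Ecol n r)ᵀ.mulVec (gstar n z H))
          (fun t => (Astar * Ecol n r)ᵀ.mulVec (z t)) (Hist p z)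
        ≤ Err T (fun H => (A * Ecol n r)ᵀ.mulVec (gstar n z H))
          (fun t => (A * Ecol n r)ᵀ.mulVec (z t)) (Hist p z) := by
    intro A _ _
    rw [hArel]
    exact Err_nonneg _ _ _ _
  obtain ⟨Arr, Ass, h1, h2, h3, h4, hA0eq⟩ := hlem1 Astar hAstar hAstar' hmin
  have hkey : A0 * Ecol n r = (Astar * Ecol n r) * Arr := by
    rw [hA0eq, Matrix.mul_assoc, reindex_mul_Ecol n r hrn, Matrix.mul_assoc]
  have hsig : (fun t => (A0 * Ecol n r)ᵀ.mulVec (z t)) = fun t => Arrᵀ.mulVec (w t) := by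
    funext t
    rw [hkey, Matrix.transpose_mul, ← Matrix.mulVec_mulVec, hw]
  have hp := hproj r r le_rfl Arr h1 h2 w
  simp only [Ecol_self, Matrix.mul_one, Matrix.transpose_one, Matrix.one_mulVec] at hp
  have hRHS : Err T (fun H => Arrᵀ.mulVec (gstar r w H)) (fun t => Arrᵀ.mulVec (w t))
      (Hist p w) = Err T (gstar r w) w (Hist p w) := by
    unfold Err
    congr 1
    apply Finset.sum_congr rfl
    intro t _
    have step : ∀ i, Arrᵀ.mulVec (w t) i - Arrᵀ.mulVec (gstar r w (Hist p w t)) i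
        = Arrᵀ.mulVec (fun i => w t i - gstar r w (Hist p w t) i) i := by
      intro i
      have := Matrix.mulVec_sub Arrᵀ (w t) (gstar r w (Hist p w t))
      have := congrFun this i
      exact this.symm
    simp only [step]
    exact sum_sq_orth Arr h2 _
  rw [hsig, Hist_mulVec]
  rw [hp, hRHS]
  exact hzero
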